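/- For every integer n ≥ 1, a(n) ≤ ((1 − 1/e)n + 1/e) · n!; that is, the expected size of the matching produced by the Ranking greedy process on MonotoneG under a uniformly random permutation is at most (1 − 1/e)n + 1/e. -/

import Mathlib

open scoped Classical

noncomputable section

/-- The element of `c` minimizing `key`, if `c` is nonempty. -/
def pickMin {n : ℕ} {α : Type*} [LinearOrder α] (key : Fin n → α)
    (c : Finset (Fin n)) : Option (Fin n) :=
  if h : c.Nonempty then some (Classical.choose (Finset.exists_min_image c key h)) else none

/-- The set of matched `V`-vertices after the first `j` arrivals of the online greedy
process on the bipartite graph with `U`-side arrival order `u_0, u_1, …` and adjacency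
`adj`, in which each arriving `u_j` is matched to its currently unmatched neighbor
minimizing `key` (if any). -/
def greedyRun {n : ℕ} {α : Type*} [LinearOrder α] (adj : ℕ → Fin n → Prop)
    (key : Fin n → α) : ℕ → Finset (Fin n)
  | 0 => ∅
  | j + 1 =>
    match pickMin key ((Finset.univ.filter fun i => adj j i) \ greedyRun adj key j) with
    | some v => insert v (greedyRun adj key j)
    | none => greedyRun adj key j

/-- The `V`-vertex that the arriving vertex `u_j` (0-indexed) gets matched to, if any. -/
def greedyMatchU {n : ℕ} {α : Type*} [LinearOrder α] (adj : ℕ → Fin n → Prop)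
    (key : Fin n → α) (j : ℕ) : Option (Fin n) :=
  pickMin key ((Finset.univ.filter fun i => adj j i) \ greedyRun adj key j)

/-- Adjacency of the monotone graph `MonotoneG` (0-indexed):
`u_j` is adjacent to `v_i` iff `j ≤ i`. -/
def monoAdj (n : ℕ) : ℕ → Fin n → Prop := fun j i => j ≤ (i : ℕ)

/-- The set of matched `V`-vertices produced by the Ranking greedy process on `MonotoneG`
with permutation `π` (where `π i` is the rank of `v_i`, 0-indexed). -/
def rankMatched (n : ℕ) (π : Equiv.Perm (Fin n)) : Finset (Fin n) :=
  greedyRun (monoAdj n) (fun i => π i) n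

/-- `x(π)`: the number of edges of the matching produced by Ranking on `MonotoneG`. -/
def xSize (n : ℕ) (π : Equiv.Perm (Fin n)) : ℕ := (rankMatched n π).card

/-- `a(n) = Σ_π x(π)`, over all `n!` permutations. -/
def aVal (n : ℕ) : ℕ := ∑ π : Equiv.Perm (Fin n), xSize n π

/-- `a(n,i)` (with `i` 1-indexed): the number of permutations `π` of `{1,…,n}` for which
the vertex of rank `i` under `π` is matched by the Ranking greedy process on `MonotoneG`. -/
def aIdx (n i : ℕ) : ℕ :=
  (Finset.univ.filter fun π : Equiv.Perm (Fin n) =>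
    ∃ v : Fin n, (π v : ℕ) = i - 1 ∧ v ∈ rankMatched n π).card

/-- `d(m,i)` (with `i` 1-indexed): the number of permutations of `{1,…,m}` all of whose
fixed points (if any) lie among the first `i` items. -/
def dIdx (m i : ℕ) : ℕ :=
  (Finset.univ.filter fun σ : Equiv.Perm (Fin m) => ∀ x, σ x = x → (x : ℕ) < i).card

/-- `d(m)`: the number of derangements of `{1,…,m}`. -/
def numDer (m : ℕ) : ℕ :=
  (Finset.univ.filter fun σ : Equiv.Perm (Fin m) => ∀ x, σ x ≠ x).card

/-- The key for the greedy-by-price process: buy the cheapest available item,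
breaking ties in favor of the smaller index. -/
def priceKey {n : ℕ} (p : Fin n → ℝ) : Fin n → Lex (ℝ × ℕ) := fun i => toLex (p i, (i : ℕ))

/-- The utility `y(u_j)` of buyer `u_j` (0-indexed) in the greedy-by-price process:
`1 - p v` if `u_j` buys item `v`, and `0` if `u_j` remains unmatched. -/
def utility (n : ℕ) (adj : ℕ → Fin n → Prop) (p : Fin n → ℝ) (j : ℕ) : ℝ :=
  (greedyMatchU adj (priceKey p) j).elim 0 (fun v => 1 - p v)

/-- The revenue `r(v)` from item `v` in the greedy-by-price process:
`p v` if `v` is sold, and `0` otherwise. -/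
def revenue (n : ℕ) (adj : ℕ → Fin n → Prop) (p : Fin n → ℝ) (v : Fin n) : ℝ :=
  if v ∈ greedyRun adj (priceKey p) n then p v else 0

/-- The `m`-th harmonic number `H_m = Σ_{i=1}^m 1/i` (with `H_0 = 0`). -/
def harm (m : ℕ) : ℝ := ∑ i ∈ Finset.range m, (1 : ℝ) / (i + 1)

/-! ### The fold -/

def Tf (f : ℕ → ℕ) : ℕ → ℕ
  | 0 => 0
  | r + 1 => Tf f r + if Tf f r ≤ f r then 1 else 0

def seqv {n : ℕ} (σ : Equiv.Perm (Fin n)) (r : ℕ) : ℕ :=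
  if h : r < n then (σ ⟨r, h⟩ : ℕ) else 0

lemma Tf_succ_le (f : ℕ → ℕ) (r : ℕ) : Tf f (r + 1) ≤ Tf f r + 1 := by
  rw [Tf]; split <;> omega

lemma Tf_mono (f : ℕ → ℕ) : Monotone (Tf f) := by
  apply monotone_nat_of_le_succ
  intro r; rw [Tf]; split <;> omega

lemma Tf_le_self (f : ℕ → ℕ) (r : ℕ) : Tf f r ≤ r := by
  induction r with
  | zero => simp [Tf]
  | succ r ih => have := Tf_succ_le f r; omega

lemma Tf_crossing (f : ℕ → ℕ) {j b : ℕ} (h : j < Tf f b) :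
    ∃ ρ < b, Tf f ρ = j ∧ Tf f (ρ + 1) = j + 1 := by
  induction b with
  | zero => simp [Tf] at h
  | succ b ih =>
    by_cases hb : j < Tf f b
    · obtain ⟨ρ, h1, h2⟩ := ih hb
      exact ⟨ρ, by omega, h2⟩
    · have h2 := Tf_succ_le f b
      exact ⟨b, by omega, by omega, by omega⟩

lemma Tf_succ_of_succat {f : ℕ → ℕ} {r : ℕ} (h : Tf f r ≤ f r) :
    Tf f (r + 1) = Tf f r + 1 := by rw [Tf, if_pos h]

lemma Tf_level_unique {f : ℕ → ℕ} {r₁ r₂ : ℕ} (h1 : Tf f r₁ ≤ f r₁) (h2 : Tf f r₂ ≤ f r₂)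
    (he : Tf f r₁ = Tf f r₂) : r₁ = r₂ := by
  rcases lt_trichotomy r₁ r₂ with h | h | h
  · have := Tf_succ_of_succat h1
    have := Tf_mono f (show r₁ + 1 ≤ r₂ by omega)
    omega
  · exact h
  · have := Tf_succ_of_succat h2
    have := Tf_mono f (show r₂ + 1 ≤ r₁ by omega)
    omega

lemma Tf_eq_card (f : ℕ → ℕ) (m : ℕ) :
    Tf f m = ∑ r ∈ Finset.range m, (if Tf f r ≤ f r then 1 else 0) := by
  induction m with
  | zero => simp [Tf]
  | succ m ih => rw [Finset.sum_range_succ, ← ih, Tf]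

/-! ### pickMin -/

lemma pickMin_eq_none {n : ℕ} {α : Type*} [LinearOrder α] (key : Fin n → α)
    {c : Finset (Fin n)} (h : pickMin key c = none) : c = ∅ := by
  by_contra hc
  rw [pickMin, dif_pos (Finset.nonempty_of_ne_empty hc)] at h
  simp at h

lemma pickMin_eq_some {n : ℕ} {α : Type*} [LinearOrder α] (key : Fin n → α)
    {c : Finset (Fin n)} {v : Fin n} (h : pickMin key c = some v) :
    v ∈ c ∧ ∀ b ∈ c, key v ≤ key b := by
  by_cases hc : c.Nonempty
  · rw [pickMin, dif_pos hc] at h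
    obtain ⟨h1, h2⟩ := Classical.choose_spec (Finset.exists_min_image c key hc)
    cases h; exact ⟨h1, h2⟩
  · rw [pickMin, dif_neg hc] at h; simp at h

/-! ### Part 1: greedyRun equals the fold -/

lemma seqv_apply {n : ℕ} (σ : Equiv.Perm (Fin n)) (ρ : Fin n) :
    seqv σ (ρ : ℕ) = (σ ρ : ℕ) := by
  simp [seqv, ρ.isLt]

lemma seqv_symm_apply {n : ℕ} (π : Equiv.Perm (Fin n)) (i : Fin n) :
    seqv π.symm ((π i : ℕ)) = (i : ℕ) := by
  rw [seqv_apply π.symm (π i), Equiv.symm_apply_apply]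

lemma greedyRun_eq_fold {n : ℕ} (π : Equiv.Perm (Fin n)) :
    ∀ j, j ≤ n →
      greedyRun (monoAdj n) (fun i => π i) j
        = Finset.univ.filter (fun i => Tf (seqv π.symm) (π i) < j ∧
            Tf (seqv π.symm) (π i) ≤ (i : ℕ)) := by
  set σ := π.symm with hσ
  intro j hj
  induction j with
  | zero => simp [greedyRun]
  | succ j ih =>
    have ihe := ih (by omega)
    have hAeq : ((Finset.univ.filter fun i : Fin n => monoAdj n j i) \
        greedyRun (monoAdj n) (fun i => π i) j)
        = Finset.univ.filter (fun i : Fin n => j ≤ (i : ℕ) ∧ j ≤ Tf (seqv σ) (π i)) := by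
      rw [ihe]
      ext i
      simp only [Finset.mem_sdiff, Finset.mem_filter, Finset.mem_univ, true_and]
      simp only [monoAdj]
      constructor
      · rintro ⟨h1, h2⟩
        refine ⟨h1, ?_⟩
        by_contra hlt
        exact h2 ⟨by omega, by omega⟩
      · rintro ⟨h1, h2⟩
        exact ⟨h1, fun hx => by omega⟩
    rw [greedyRun]
    rcases hpick : pickMin (fun i => π i)
        ((Finset.univ.filter fun i : Fin n => monoAdj n j i) \
          greedyRun (monoAdj n) (fun i => π i) j) with _ | v
    · -- none case
      have hA : Finset.univ.filter (fun i : Fin n => j ≤ (i : ℕ) ∧ j ≤ Tf (seqv σ) (π i)) = ∅ := by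
        rw [← hAeq]; exact pickMin_eq_none _ hpick
      rw [ihe]
      ext i
      simp only [Finset.mem_filter, Finset.mem_univ, true_and]
      constructor
      · rintro ⟨h1, h2⟩; exact ⟨by omega, h2⟩
      · rintro ⟨h1, h2⟩
        refine ⟨?_, h2⟩
        by_cases h : Tf (seqv σ) (π i) < j
        · exact h
        · exfalso
          have hmem : i ∈ Finset.univ.filter
              (fun i : Fin n => j ≤ (i : ℕ) ∧ j ≤ Tf (seqv σ) (π i)) := by
            simp only [Finset.mem_filter, Finset.mem_univ, true_and]
            omega
          rw [hA] at hmem; simp at hmem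
    · -- some case
      obtain ⟨hv1, hv2⟩ := pickMin_eq_some _ hpick
      rw [hAeq] at hv1
      simp only [Finset.mem_filter, Finset.mem_univ, true_and] at hv1
      obtain ⟨hjv, hjT⟩ := hv1
      -- Claim 1 : Tf (seqv σ) (π v) = j
      have hTv : Tf (seqv σ) (π v) = j := by
        by_contra hne
        have hlt : j < Tf (seqv σ) (π v) := by omega
        obtain ⟨ρ, hρ1, hρ2, hρ3⟩ := Tf_crossing (seqv σ) hlt
        have hρn : ρ < n := lt_trans hρ1 (π v).isLt
        have hseq : seqv σ ρ = ((σ ⟨ρ, hρn⟩ : Fin n) : ℕ) := by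
          rw [seqv, dif_pos hρn]
        have hπi' : π (σ ⟨ρ, hρn⟩) = ⟨ρ, hρn⟩ := by rw [hσ, Equiv.apply_symm_apply]
        have hsucc : Tf (seqv σ) ρ ≤ seqv σ ρ := by
          by_contra hns
          rw [Tf, if_neg hns] at hρ3
          omega
        have hi'A : σ ⟨ρ, hρn⟩ ∈ Finset.univ.filter
            (fun i : Fin n => j ≤ (i : ℕ) ∧ j ≤ Tf (seqv σ) (π i)) := by
          simp only [Finset.mem_filter, Finset.mem_univ, true_and, hπi']
          constructor
          · omega
          · omega
        rw [← hAeq] at hi'A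
        have hle := hv2 _ hi'A
        rw [hπi'] at hle
        have := Fin.le_def.mp hle
        simp only at this
        omega
      -- v succeeds at π v
      have hvs := seqv_symm_apply π v
      rw [ihe]
      ext i
      simp only [Finset.mem_insert, Finset.mem_filter, Finset.mem_univ, true_and]
      constructor
      · rintro (h | ⟨h1, h2⟩)
        · subst h
          exact ⟨by omega, by omega⟩
        · exact ⟨by omega, h2⟩
      · rintro ⟨h1, h2⟩
        by_cases h : Tf (seqv σ) (π i) < j
        · exact Or.inr ⟨h, h2⟩
        · left
          have hTi : Tf (seqv σ) (π i) = j := by omega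
          have hsucci : Tf (seqv σ) (π i) ≤ seqv σ (π i) := by
            rw [seqv_symm_apply]; omega
          have hsuccv : Tf (seqv σ) (π v) ≤ seqv σ (π v) := by
            rw [seqv_symm_apply]; omega
          have heq : ((π i) : ℕ) = ((π v) : ℕ) :=
            Tf_level_unique hsucci hsuccv (by omega)
          exact π.injective (Fin.ext heq)

lemma xSize_eq_fold {n : ℕ} (π : Equiv.Perm (Fin n)) :
    xSize n π = Tf (seqv π.symm) n := by
  set σ := π.symm with hσ
  set T := Tf (seqv σ) with hT
  rw [xSize, rankMatched, greedyRun_eq_fold π n le_rfl]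
  have h1 : (Finset.univ.filter (fun i => T (π i) < n ∧ T (π i) ≤ (i : ℕ))).card
      = (Finset.univ.filter (fun (ρ : Fin n) => T (ρ : ℕ) ≤ seqv σ (ρ : ℕ))).card := by
    apply Finset.card_bij (fun i _ => π i)
    · intro i hi
      simp only [Finset.mem_filter, Finset.mem_univ, true_and] at hi ⊢
      rw [seqv_symm_apply]; exact hi.2
    · intro a ha b hb hab
      exact π.injective hab
    · intro ρ hρ
      simp only [Finset.mem_filter, Finset.mem_univ, true_and] at hρ
      refine ⟨π.symm ρ, ?_, by simp⟩
      simp only [Finset.mem_filter, Finset.mem_univ, true_and, Equiv.apply_symm_apply]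
      constructor
      · calc T (ρ:ℕ) ≤ (ρ:ℕ) := Tf_le_self _ _
          _ < n := ρ.isLt
      · have : seqv σ (ρ : ℕ) = ((σ ρ : Fin n) : ℕ) := seqv_apply σ ρ
        rw [this] at hρ
        show T (ρ:ℕ) ≤ ((π.symm ρ : Fin n) : ℕ)
        rw [← hσ]; exact hρ
  rw [h1, hT, Tf_eq_card]
  rw [Finset.card_filter]
  rw [← Fin.sum_univ_eq_sum_range (fun r => if Tf (seqv σ) r ≤ seqv σ r then 1 else 0)]

lemma aVal_eq_fold (n : ℕ) : aVal n = ∑ σ : Equiv.Perm (Fin n), Tf (seqv σ) n := by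
  rw [aVal]
  refine Fintype.sum_equiv (Equiv.inv (Equiv.Perm (Fin n))) _ _ (fun σ => ?_)
  rw [xSize_eq_fold]
  congr 1


def Gcount (n r : ℕ) : ℕ :=
  (Finset.univ.filter fun σ : Equiv.Perm (Fin n) => Tf (seqv σ) r ≤ seqv σ r).card

lemma Gcount_zero (n : ℕ) : Gcount n 0 = n.factorial := by
  rw [Gcount]
  rw [Finset.filter_true_of_mem (fun σ _ => by simp [Tf])]
  simp [Finset.card_univ, Fintype.card_perm]

/-! ### helpers -/

lemma seqv_lt {n : ℕ} (σ : Equiv.Perm (Fin n)) {r : ℕ} (h : r < n) :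
    seqv σ r = ((σ ⟨r, h⟩ : Fin n) : ℕ) := by rw [seqv, dif_pos h]

lemma seqv_inj {n : ℕ} (σ : Equiv.Perm (Fin n)) {r s : ℕ} (hr : r < n) (hs : s < n)
    (hne : r ≠ s) : seqv σ r ≠ seqv σ s := by
  rw [seqv_lt σ hr, seqv_lt σ hs]
  intro h
  have := σ.injective (Fin.ext h)
  simp only [Fin.mk.injEq] at this
  exact hne this

lemma succAbove_val {n : ℕ} (q : Fin (n + 1)) (w : Fin n) :
    ((q.succAbove w : Fin (n + 1)) : ℕ) = if (w : ℕ) < (q : ℕ) then (w : ℕ) else (w : ℕ) + 1 := by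
  rcases lt_or_ge ((w : ℕ)) ((q : ℕ)) with h | h
  · rw [Fin.succAbove_of_castSucc_lt _ _ (by rwa [Fin.lt_def, Fin.coe_castSucc]), if_pos h]
    simp
  · rw [Fin.succAbove_of_le_castSucc _ _ (by rwa [Fin.le_def, Fin.coe_castSucc]), if_neg (by omega)]
    simp

/-! ### swap lemma -/

section Swap
variable {n : ℕ} (r : ℕ) (hr : r + 1 < n)

lemma seqv_mul_swap (σ : Equiv.Perm (Fin n)) (s : ℕ) (hs : s < n) (h1 : s ≠ r) (h2 : s ≠ r + 1) :
    seqv (σ * Equiv.swap (⟨r, by omega⟩ : Fin n) ⟨r + 1, hr⟩) s = seqv σ s := by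
  rw [seqv_lt _ hs, seqv_lt σ hs, Equiv.Perm.mul_apply,
    Equiv.swap_apply_of_ne_of_ne (by simp [Fin.ext_iff, h1]) (by simp [Fin.ext_iff, h2])]

lemma seqv_mul_swap_r (σ : Equiv.Perm (Fin n)) :
    seqv (σ * Equiv.swap (⟨r, by omega⟩ : Fin n) ⟨r + 1, hr⟩) r = seqv σ (r + 1) := by
  rw [seqv_lt _ (by omega : r < n), seqv_lt σ hr, Equiv.Perm.mul_apply, Equiv.swap_apply_left]

lemma seqv_mul_swap_r1 (σ : Equiv.Perm (Fin n)) :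
    seqv (σ * Equiv.swap (⟨r, by omega⟩ : Fin n) ⟨r + 1, hr⟩) (r + 1) = seqv σ r := by
  rw [seqv_lt _ hr, seqv_lt σ (by omega : r < n), Equiv.Perm.mul_apply, Equiv.swap_apply_right]

lemma Tf_mul_swap (σ : Equiv.Perm (Fin n)) :
    ∀ s ≤ r, Tf (seqv (σ * Equiv.swap (⟨r, by omega⟩ : Fin n) ⟨r + 1, hr⟩)) s = Tf (seqv σ) s := by
  intro s hs
  induction s with
  | zero => rfl
  | succ s ih =>
    rw [Tf, Tf, ih (by omega), seqv_mul_swap r hr σ s (by omega) (by omega) (by omega)]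

lemma swap_card (hn : r + 1 < n) :
    (Finset.univ.filter fun σ : Equiv.Perm (Fin n) =>
        seqv σ (r + 1) < Tf (seqv σ) (r + 1)).card
      = (Finset.univ.filter fun σ : Equiv.Perm (Fin n) => seqv σ r < Tf (seqv σ) r).card
        + (Finset.univ.filter fun σ : Equiv.Perm (Fin n) =>
            seqv σ r = Tf (seqv σ) r ∧ Tf (seqv σ) (r + 1) ≤ seqv σ (r + 1)).card := by
  classical
  set pr : Fin n := ⟨r, by omega⟩
  set pr1 : Fin n := ⟨r + 1, hn⟩
  set w := Equiv.swap pr pr1 with hw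
  have hww : ∀ σ : Equiv.Perm (Fin n), σ * w * w = σ := by
    intro σ; rw [mul_assoc, hw, Equiv.swap_mul_self, mul_one]
  -- local computation lemmas
  have hloc : ∀ σ : Equiv.Perm (Fin n),
      Tf (seqv (σ * w)) r = Tf (seqv σ) r
      ∧ seqv (σ * w) r = seqv σ (r + 1)
      ∧ seqv (σ * w) (r + 1) = seqv σ r := by
    intro σ
    exact ⟨Tf_mul_swap r hn σ r le_rfl, seqv_mul_swap_r r hn σ, seqv_mul_swap_r1 r hn σ⟩
  have hTs : ∀ σ : Equiv.Perm (Fin n),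
      Tf (seqv σ) (r + 1)
        = Tf (seqv σ) r + if Tf (seqv σ) r ≤ seqv σ r then 1 else 0 := fun _ => rfl
  have hab : ∀ σ : Equiv.Perm (Fin n), seqv σ r ≠ seqv σ (r + 1) :=
    fun σ => seqv_inj σ (by omega) hn (by omega)
  -- key membership transfers
  have key1 : ∀ σ : Equiv.Perm (Fin n), seqv σ (r + 1) < Tf (seqv σ) (r + 1) →
      (seqv (σ * w) r < Tf (seqv (σ * w)) r
        ∨ (seqv (σ * w) r = Tf (seqv (σ * w)) r
            ∧ Tf (seqv (σ * w)) (r + 1) ≤ seqv (σ * w) (r + 1))) := by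
    intro σ h
    obtain ⟨e1, e2, e3⟩ := hloc σ
    have h1 := hTs σ
    have h2 := hTs (σ * w)
    have h3 := hab σ
    rw [e1, e2, e3]
    split_ifs at h1 h2 <;> omega
  have key2 : ∀ σ : Equiv.Perm (Fin n),
      (seqv σ r < Tf (seqv σ) r
        ∨ (seqv σ r = Tf (seqv σ) r ∧ Tf (seqv σ) (r + 1) ≤ seqv σ (r + 1))) →
      seqv (σ * w) (r + 1) < Tf (seqv (σ * w)) (r + 1) := by
    intro σ h
    obtain ⟨e1, e2, e3⟩ := hloc σ
    have h1 := hTs σ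
    have h2 := hTs (σ * w)
    have h3 := hab σ
    have h4 := hTs (σ * w)
    rw [h4, e1, e2, e3]
    split_ifs at h1 ⊢ <;> omega
  have hcard : (Finset.univ.filter fun σ : Equiv.Perm (Fin n) =>
      seqv σ (r + 1) < Tf (seqv σ) (r + 1)).card
      = (Finset.univ.filter fun σ : Equiv.Perm (Fin n) =>
          (seqv σ r < Tf (seqv σ) r
            ∨ (seqv σ r = Tf (seqv σ) r ∧ Tf (seqv σ) (r + 1) ≤ seqv σ (r + 1)))).card := by
    apply Finset.card_bij' (fun σ _ => σ * w) (fun σ _ => σ * w)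
    · intro σ hσ
      simp only [Finset.mem_filter, Finset.mem_univ, true_and] at hσ ⊢
      exact key1 σ hσ
    · intro σ hσ
      simp only [Finset.mem_filter, Finset.mem_univ, true_and] at hσ ⊢
      exact key2 σ hσ
    · intro σ _; exact hww σ
    · intro σ _; exact hww σ
  rw [hcard, Finset.filter_or, Finset.card_union_of_disjoint]
  rw [Finset.disjoint_filter]
  intro σ _ h1 h2
  omega

end Swap

/-! ### delete-hit bijection -/

section Del
variable {n : ℕ}

/-- Fold transfer: if `σ` on `Fin (n+1)` and `σ'` on `Fin n` are related by deleting
position `r` (with value `q`), then the folds agree up to `r`. -/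
lemma fold_transfer {r : ℕ} (hr : r < n) (σ : Equiv.Perm (Fin (n + 1)))
    (σ' : Equiv.Perm (Fin n)) (q : Fin (n + 1))
    (hrel : ∀ s : Fin n, σ ((⟨r, by omega⟩ : Fin (n + 1)).succAbove s) = q.succAbove (σ' s))
    (ht : (q : ℕ) = Tf (seqv σ) r ∨ (q : ℕ) = Tf (seqv σ') r) :
    ∀ s ≤ r, Tf (seqv σ) s = Tf (seqv σ') s := by
  set pr : Fin (n + 1) := ⟨r, by omega⟩ with hpr
  -- value relation for s < r
  have hval : ∀ s : ℕ, s < r → seqv σ s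
      = (if seqv σ' s < (q : ℕ) then seqv σ' s else seqv σ' s + 1) := by
    intro s hs
    have hsn : s < n := by omega
    have hsA : pr.succAbove ⟨s, hsn⟩ = ⟨s, by omega⟩ := by
      rw [Fin.succAbove_of_castSucc_lt]
      · rfl
      · rw [Fin.lt_def]; simpa using hs
    have : seqv σ s = ((q.succAbove (σ' ⟨s, hsn⟩) : Fin (n + 1)) : ℕ) := by
      rw [seqv_lt σ (show s < n + 1 by omega), ← hsA, hrel]
    rw [this, succAbove_val, seqv_lt σ' hsn]
  intro s hs
  induction s with
  | zero => rfl
  | succ s ih =>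
    have ihs := ih (by omega)
    have hτq : Tf (seqv σ) s ≤ (q : ℕ) := by
      rcases ht with h | h
      · rw [h]; exact Tf_mono _ (by omega)
      · rw [ihs, h]; exact Tf_mono _ (by omega)
    rw [Tf, Tf, ihs, hval s (by omega)]
    rw [← ihs]
    split_ifs <;> omega

lemma fold_transfer_succ {r : ℕ} (hr : r < n) (σ : Equiv.Perm (Fin (n + 1)))
    (σ' : Equiv.Perm (Fin n)) (q : Fin (n + 1))
    (hq : σ ⟨r, by omega⟩ = q)
    (hrel : ∀ s : Fin n, σ ((⟨r, by omega⟩ : Fin (n + 1)).succAbove s) = q.succAbove (σ' s))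
    (ht : (q : ℕ) = Tf (seqv σ) r ∨ (q : ℕ) = Tf (seqv σ') r) :
    Tf (seqv σ) r = Tf (seqv σ') r
    ∧ seqv σ r = Tf (seqv σ) r
    ∧ ((Tf (seqv σ) (r + 1) ≤ seqv σ (r + 1)) ↔ (Tf (seqv σ') r ≤ seqv σ' r)) := by
  have hTT := fold_transfer hr σ σ' q hrel ht
  have hTr : Tf (seqv σ) r = Tf (seqv σ') r := hTT r le_rfl
  have hqv : seqv σ r = (q : ℕ) := by
    rw [seqv_lt σ (show r < n + 1 by omega), hq]
  have hqT : (q : ℕ) = Tf (seqv σ) r := by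
    rcases ht with h | h
    · exact h
    · rw [hTr]; exact h
  have hhit : seqv σ r = Tf (seqv σ) r := by rw [hqv, hqT]
  refine ⟨hTr, hhit, ?_⟩
  -- threshold at r+1
  have hT1 : Tf (seqv σ) (r + 1) = Tf (seqv σ) r + 1 := by
    rw [Tf, if_pos (le_of_eq hhit.symm)]
  -- value at r+1
  have hsA : (⟨r, by omega⟩ : Fin (n + 1)).succAbove ⟨r, hr⟩ = ⟨r + 1, by omega⟩ := by
    rw [Fin.succAbove_of_le_castSucc]
    · rfl
    · rw [Fin.le_def]; simp
  have hv1 : seqv σ (r + 1) = ((q.succAbove (σ' ⟨r, hr⟩) : Fin (n + 1)) : ℕ) := by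
    rw [seqv_lt σ (show r + 1 < n + 1 by omega), ← hsA, hrel]
  have hv1' : seqv σ (r + 1)
      = (if seqv σ' r < (q : ℕ) then seqv σ' r else seqv σ' r + 1) := by
    rw [hv1, succAbove_val, seqv_lt σ' hr]
  rw [hT1, hv1', ← hTr, ← hqT]
  split_ifs <;> omega

end Del

section DelBij
variable {n : ℕ}

def insPerm (r : ℕ) (hr : r < n) (σ' : Equiv.Perm (Fin n)) (q : Fin (n + 1)) :
    Equiv.Perm (Fin (n + 1)) :=
  (finSuccEquiv' ⟨r, by omega⟩).trans ((Equiv.optionCongr σ').trans (finSuccEquiv' q).symm)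

lemma insPerm_at (r : ℕ) (hr : r < n) (σ' : Equiv.Perm (Fin n)) (q : Fin (n + 1)) :
    insPerm r hr σ' q ⟨r, by omega⟩ = q := by
  simp [insPerm]

lemma insPerm_rel (r : ℕ) (hr : r < n) (σ' : Equiv.Perm (Fin n)) (q : Fin (n + 1))
    (s : Fin n) :
    insPerm r hr σ' q ((⟨r, by omega⟩ : Fin (n + 1)).succAbove s) = q.succAbove (σ' s) := by
  simp [insPerm]

def delPerm (r : ℕ) (hr : r < n) (σ : Equiv.Perm (Fin (n + 1))) : Equiv.Perm (Fin n) :=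
  Equiv.removeNone ((finSuccEquiv' ⟨r, by omega⟩).symm.trans
    (σ.trans (finSuccEquiv' (σ ⟨r, by omega⟩))))

lemma delPerm_rel (r : ℕ) (hr : r < n) (σ : Equiv.Perm (Fin (n + 1))) (s : Fin n) :
    σ ((⟨r, by omega⟩ : Fin (n + 1)).succAbove s)
      = (σ ⟨r, by omega⟩).succAbove (delPerm r hr σ s) := by
  set pr : Fin (n + 1) := ⟨r, by omega⟩
  set q := σ pr with hq
  set E := (finSuccEquiv' pr).symm.trans (σ.trans (finSuccEquiv' q)) with hE
  have hne : σ (pr.succAbove s) ≠ q := by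
    rw [hq]
    intro h
    exact Fin.succAbove_ne pr s (σ.injective h)
  have h2 : E (some s) = finSuccEquiv' q (σ (pr.succAbove s)) := by
    rw [hE]; simp
  have hex : ∃ x', E (some s) = some x' := by
    rcases h : finSuccEquiv' q (σ (pr.succAbove s)) with _ | x
    · exfalso
      have := (finSuccEquiv' q).injective (h.trans (finSuccEquiv'_at q).symm)
      exact hne this
    · exact ⟨x, by rw [h2, h]⟩
  have h1 : some (delPerm r hr σ s) = E (some s) := Equiv.removeNone_some E hex
  rw [h2] at h1
  have := congrArg (finSuccEquiv' q).symm h1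
  rw [Equiv.symm_apply_apply, finSuccEquiv'_symm_some] at this
  exact this.symm

lemma perm_ext_succAbove (p : Fin (n + 1)) (σ τ : Equiv.Perm (Fin (n + 1)))
    (h1 : σ p = τ p) (h2 : ∀ s : Fin n, σ (p.succAbove s) = τ (p.succAbove s)) : σ = τ := by
  apply Equiv.ext
  intro x
  exact Fin.succAboveCases p h1 h2 x

set_option maxHeartbeats 2000000 in
lemma H_card (r : ℕ) (hr : r < n) :
    (Finset.univ.filter fun σ : Equiv.Perm (Fin (n + 1)) =>
        seqv σ r = Tf (seqv σ) r ∧ Tf (seqv σ) (r + 1) ≤ seqv σ (r + 1)).card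
      = Gcount n r := by
  rw [Gcount]
  refine Finset.card_bij' (fun σ _ => delPerm r hr σ)
    (fun σ' _ => insPerm r hr σ' ⟨Tf (seqv σ') r, by have := Tf_le_self (seqv σ') r; omega⟩)
    ?_ ?_ ?_ ?_
  · -- del maps H to B
    intro σ hσ
    simp only [Finset.mem_filter, Finset.mem_univ, true_and] at hσ ⊢
    obtain ⟨hhit, hsucc⟩ := hσ
    have hqv : ((σ ⟨r, by omega⟩ : Fin (n + 1)) : ℕ) = Tf (seqv σ) r :=
      (seqv_lt σ (show r < n + 1 by omega)).symm.trans hhit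
    have := fold_transfer_succ hr σ (delPerm r hr σ) (σ ⟨r, by omega⟩) rfl
      (delPerm_rel r hr σ) (Or.inl hqv)
    obtain ⟨hTr, _, hiff⟩ := this
    exact hiff.mp hsucc
  · -- ins maps B to H
    intro σ' hσ'
    simp only [Finset.mem_filter, Finset.mem_univ, true_and] at hσ' ⊢
    set q : Fin (n + 1) := ⟨Tf (seqv σ') r, by have := Tf_le_self (seqv σ') r; omega⟩ with hqdef
    have := fold_transfer_succ hr (insPerm r hr σ' q) σ' q (insPerm_at r hr σ' q)
      (insPerm_rel r hr σ' q) (Or.inr rfl)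
    obtain ⟨hTr, hhit, hiff⟩ := this
    exact ⟨hhit, hiff.mpr hσ'⟩
  · -- left inverse : ins (del σ) = σ
    intro σ hσ
    simp only [Finset.mem_filter, Finset.mem_univ, true_and] at hσ
    obtain ⟨hhit, hsucc⟩ := hσ
    have hqv : ((σ ⟨r, by omega⟩ : Fin (n + 1)) : ℕ) = Tf (seqv σ) r :=
      (seqv_lt σ (show r < n + 1 by omega)).symm.trans hhit
    have htr := fold_transfer hr σ (delPerm r hr σ) (σ ⟨r, by omega⟩)
      (delPerm_rel r hr σ) (Or.inl hqv)
    have hTr : Tf (seqv σ) r = Tf (seqv (delPerm r hr σ)) r := htr r le_rfl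
    have hqeq : (⟨Tf (seqv (delPerm r hr σ)) r,
        by have := Tf_le_self (seqv (delPerm r hr σ)) r; omega⟩ : Fin (n + 1))
        = σ ⟨r, by omega⟩ := Fin.ext (hTr.symm.trans hqv.symm)
    refine perm_ext_succAbove (⟨r, by omega⟩ : Fin (n + 1)) _ _ ?_ ?_
    · rw [insPerm_at]; exact hqeq
    · intro s
      rw [insPerm_rel, delPerm_rel r hr σ s]
      exact congrArg (fun x : Fin (n + 1) => Fin.succAbove x (delPerm r hr σ s)) hqeq
  · -- right inverse : del (ins σ') = σ'
    intro σ' hσ'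
    apply Equiv.ext
    intro s
    have h1 := delPerm_rel r hr
      (insPerm r hr σ' ⟨Tf (seqv σ') r, by have := Tf_le_self (seqv σ') r; omega⟩) s
    rw [insPerm_at, insPerm_rel] at h1
    exact (Fin.succAbove_right_injective h1).symm

end DelBij

/-! ### recursion and closed form -/

lemma Gcount_split (N k : ℕ) :
    Gcount N k + (Finset.univ.filter fun σ : Equiv.Perm (Fin N) =>
      seqv σ k < Tf (seqv σ) k).card = N.factorial := by
  have h := Finset.card_filter_add_card_filter_not
    (s := (Finset.univ : Finset (Equiv.Perm (Fin N))))
    (p := fun σ => Tf (seqv σ) k ≤ seqv σ k)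
  rw [Gcount]
  have h2 : (Finset.univ.filter fun σ : Equiv.Perm (Fin N) =>
      ¬ (Tf (seqv σ) k ≤ seqv σ k)) = (Finset.univ.filter fun σ : Equiv.Perm (Fin N) =>
      seqv σ k < Tf (seqv σ) k) := by
    apply Finset.filter_congr
    intro σ _
    simp [not_le]
  rw [h2] at h
  rw [h]
  simp [Finset.card_univ, Fintype.card_perm]

lemma Gcount_rec (n r : ℕ) (hr : r < n) :
    Gcount (n + 1) (r + 1) + Gcount n r = Gcount (n + 1) r := by
  have hs := swap_card r (show r + 1 < n + 1 by omega)
  have hH := H_card r hr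
  have h1 := Gcount_split (n + 1) (r + 1)
  have h2 := Gcount_split (n + 1) r
  omega

def Dcf (n r : ℕ) : ℤ :=
  ∑ j ∈ Finset.range (r + 1), (-1 : ℤ) ^ j * (r.choose j) * ((n - j).factorial : ℤ)

lemma Dcf_zero (n : ℕ) : Dcf n 0 = (n.factorial : ℤ) := by
  simp [Dcf]

lemma Dcf_rec (n r : ℕ) : Dcf (n + 1) (r + 1) = Dcf (n + 1) r - Dcf n r := by
  rw [Dcf, Dcf, Dcf]
  rw [Finset.sum_range_succ'
    (fun j => (-1 : ℤ) ^ j * ((r + 1).choose j) * (((n + 1) - j).factorial : ℤ)) (r + 1)]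
  rw [Finset.sum_range_succ'
    (fun j => (-1 : ℤ) ^ j * (r.choose j) * (((n + 1) - j).factorial : ℤ)) r]
  have h1 : ∀ i ∈ Finset.range (r + 1),
      (-1 : ℤ) ^ (i + 1) * (((r + 1).choose (i + 1) : ℕ)) * (((n + 1) - (i + 1)).factorial : ℤ)
      = -((-1 : ℤ) ^ i * (r.choose i) * ((n - i).factorial : ℤ))
        + -((-1 : ℤ) ^ i * (r.choose (i + 1)) * ((n - i).factorial : ℤ)) := by
    intro i _
    rw [Nat.choose_succ_succ]
    have he : n + 1 - (i + 1) = n - i := by omega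
    rw [he]
    push_cast
    ring
  rw [Finset.sum_congr rfl h1, Finset.sum_add_distrib]
  have h2 : ∀ i ∈ Finset.range r,
      (-1 : ℤ) ^ (i + 1) * (r.choose (i + 1)) * (((n + 1) - (i + 1)).factorial : ℤ)
      = -((-1 : ℤ) ^ i * (r.choose (i + 1)) * ((n - i).factorial : ℤ)) := by
    intro i _
    have he : n + 1 - (i + 1) = n - i := by omega
    rw [he]
    ring
  rw [Finset.sum_congr rfl h2]
  have h3 : ∑ i ∈ Finset.range (r + 1), -((-1 : ℤ) ^ i * (r.choose (i + 1)) * ((n - i).factorial : ℤ))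
      = ∑ i ∈ Finset.range r, -((-1 : ℤ) ^ i * (r.choose (i + 1)) * ((n - i).factorial : ℤ)) := by
    rw [Finset.sum_range_succ, Nat.choose_succ_self]
    simp
  rw [h3]
  have h4 : ∑ i ∈ Finset.range (r + 1), -((-1 : ℤ) ^ i * (r.choose i) * ((n - i).factorial : ℤ))
      = -∑ j ∈ Finset.range (r + 1), (-1 : ℤ) ^ j * (r.choose j) * ((n - j).factorial : ℤ) := by
    rw [← Finset.sum_neg_distrib]
  rw [h4]
  simp only [Nat.choose_zero_right, Nat.cast_one, pow_zero, one_mul, mul_one, Nat.sub_zero]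
  ring

lemma Gcount_eq_Dcf : ∀ n r, r < n → (Gcount n r : ℤ) = Dcf n r := by
  intro n
  induction n with
  | zero => intro r hr; omega
  | succ n ihn =>
    intro r
    induction r with
    | zero =>
      intro _
      rw [Gcount_zero, Dcf_zero]
    | succ r ihr =>
      intro hr
      have hrn : r < n := by omega
      have hrec := Gcount_rec n r hrn
      have h1 : (Gcount (n + 1) (r + 1) : ℤ) = (Gcount (n + 1) r : ℤ) - (Gcount n r : ℤ) := by
        have := congrArg (fun x : ℕ => (x : ℤ)) hrec
        push_cast at this
        omega
      rw [h1, ihr (by omega), ihn r hrn, Dcf_rec]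

/-! ### summing over r -/

lemma triangle_swap (t : ℕ → ℕ → ℤ) :
    ∀ N : ℕ, ∑ r ∈ Finset.range N, ∑ j ∈ Finset.range (r + 1), t j r
      = ∑ j ∈ Finset.range N, ∑ r ∈ Finset.Ico j N, t j r := by
  intro N
  induction N with
  | zero => simp
  | succ N ih =>
    rw [Finset.sum_range_succ, ih]
    have h1 : ∀ j ∈ Finset.range (N + 1), ∑ r ∈ Finset.Ico j (N + 1), t j r
        = (∑ r ∈ Finset.Ico j N, t j r) + t j N := by
      intro j hj
      simp only [Finset.mem_range] at hj
      rw [Finset.sum_Ico_succ_top (by omega)]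
    rw [Finset.sum_congr rfl h1, Finset.sum_add_distrib]
    have h2 : ∑ j ∈ Finset.range (N + 1), ∑ r ∈ Finset.Ico j N, t j r
        = ∑ j ∈ Finset.range N, ∑ r ∈ Finset.Ico j N, t j r := by
      rw [Finset.sum_range_succ]
      simp
    rw [h2]

lemma sum_Dcf (n : ℕ) (hn : 1 ≤ n) :
    ∑ r ∈ Finset.range n, Dcf n r
      = ∑ j ∈ Finset.range n, (-1 : ℤ) ^ j * (n.choose (j + 1)) * ((n - j).factorial : ℤ) := by
  have h0 : ∑ r ∈ Finset.range n, Dcf n r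
      = ∑ r ∈ Finset.range n, ∑ j ∈ Finset.range (r + 1),
          (-1 : ℤ) ^ j * (r.choose j) * ((n - j).factorial : ℤ) := rfl
  rw [h0, triangle_swap (fun j r => (-1 : ℤ) ^ j * (r.choose j) * ((n - j).factorial : ℤ)) n]
  apply Finset.sum_congr rfl
  intro j hj
  simp only [Finset.mem_range] at hj
  have h1 : ∑ r ∈ Finset.Ico j n, (-1 : ℤ) ^ j * (r.choose j) * ((n - j).factorial : ℤ)
      = ((-1 : ℤ) ^ j * ((n - j).factorial : ℤ)) * ∑ r ∈ Finset.Ico j n, (r.choose j : ℤ) := by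
    rw [Finset.mul_sum]
    apply Finset.sum_congr rfl
    intro r _
    ring
  rw [h1]
  have h2 : ∑ r ∈ Finset.Ico j n, (r.choose j : ℤ) = ((n.choose (j + 1) : ℕ) : ℤ) := by
    have : Finset.Ico j n = Finset.Icc j (n - 1) := by
      rw [← Finset.Ico_add_one_right_eq_Icc]
      congr 1
      omega
    rw [this]
    rw [← Nat.cast_sum]
    rw [Nat.sum_Icc_choose]
    congr 2
    omega
  rw [h2]
  ring

def Pp (m : ℕ) : ℝ := ∑ k ∈ Finset.range (m + 1), (-1 : ℝ) ^ k / k.factorial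

lemma Pp_succ (m : ℕ) : Pp (m + 1) = Pp m + (-1 : ℝ) ^ (m + 1) / (m + 1).factorial :=
  Finset.sum_range_succ _ _

lemma exp_neg_one_le_Pp_even (m : ℕ) (hm : Even m) : Real.exp (-1) ≤ Pp m := by
  have hb := Real.exp_bound (x := -1) (by norm_num) (n := m + 2) (by omega)
  have habs : |(-1 : ℝ)| = 1 := by norm_num
  rw [habs, one_pow, one_mul] at hb
  have hsum : ∑ i ∈ Finset.range (m + 2), (-1 : ℝ) ^ i / i.factorial = Pp (m + 1) := rfl
  rw [hsum] at hb
  have hb1 := (abs_sub_le_iff.mp hb).1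
  have h2 : Pp (m + 1) = Pp m - 1 / (m + 1).factorial := by
    rw [Pp_succ]
    have : (-1 : ℝ) ^ (m + 1) = -1 := (hm.add_one).neg_one_pow
    rw [this]
    ring
  rw [h2] at hb1
  have h3 : (((m + 2 : ℕ).succ : ℕ) : ℝ) / (((m + 2 : ℕ).factorial : ℝ) * ((m + 2 : ℕ) : ℝ))
      ≤ 1 / ((m + 1).factorial : ℝ) := by
    rw [div_le_div_iff₀ (by positivity) (by positivity)]
    have hfact : ((m + 2 : ℕ).factorial : ℝ) = ((m : ℝ) + 2) * ((m + 1).factorial : ℝ) := by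
      rw [Nat.factorial_succ]; push_cast; ring
    rw [hfact]
    have hle : (((m + 2 : ℕ).succ : ℕ) : ℝ) ≤ ((m : ℝ) + 2) * ((m : ℝ) + 2) := by
      push_cast
      nlinarith [show (0:ℝ) ≤ (m : ℝ) by positivity]
    calc (((m + 2 : ℕ).succ : ℕ) : ℝ) * ((m + 1).factorial : ℝ)
        ≤ (((m : ℝ) + 2) * ((m : ℝ) + 2)) * ((m + 1).factorial : ℝ) :=
          mul_le_mul_of_nonneg_right hle (by positivity)
      _ = 1 * (((m : ℝ) + 2) * ((m + 1).factorial : ℝ) * ((m + 2 : ℕ) : ℝ)) := by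
          push_cast; ring
  have hb2 : Real.exp (-1) - (Pp m - 1 / (m + 1).factorial)
      ≤ 1 / ((m + 1).factorial : ℝ) := le_trans hb1 h3
  linarith

lemma two_le_exp_one : (2 : ℝ) ≤ Real.exp 1 := by
  have := Real.add_one_le_exp 1
  linarith

lemma three_exp_neg_one : (1 : ℝ) + 1 / 24 ≤ 3 * Real.exp (-1) := by
  rw [Real.exp_neg]
  have hpos : (0 : ℝ) < Real.exp 1 := Real.exp_pos 1
  have h288 : Real.exp 1 ≤ 2.88 := by linarith [Real.exp_one_lt_d9]
  have hinv : (2.88 : ℝ)⁻¹ ≤ (Real.exp 1)⁻¹ := by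
    apply inv_anti₀ hpos h288
  have : (1 : ℝ) + 1/24 ≤ 3 * (2.88 : ℝ)⁻¹ := by norm_num
  nlinarith

lemma key_ineq (n : ℕ) (hn : 1 ≤ n) :
    1 + ((n : ℝ) - 1) * Real.exp (-1) ≤ ((n : ℝ) + 1) * Pp n + Pp (n - 1) := by
  have hexp_pos : (0 : ℝ) < Real.exp (-1) := Real.exp_pos _
  have hcore := three_exp_neg_one
  rcases eq_or_lt_of_le hn with h1 | h1
  · have : n = 1 := h1.symm
    subst this
    have hP1 : Pp 1 = 0 := by norm_num [Pp, Finset.sum_range_succ]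
    have hP0 : Pp 0 = 1 := by norm_num [Pp]
    norm_num [hP1, hP0]
  rcases eq_or_lt_of_le (show 2 ≤ n by omega) with h2 | h2
  · have : n = 2 := h2.symm
    subst this
    have hP2 : Pp 2 = 1/2 := by norm_num [Pp, Finset.sum_range_succ]
    have hP1 : Pp 1 = 0 := by norm_num [Pp, Finset.sum_range_succ]
    have he : Real.exp (-1) ≤ 1/2 := by
      rw [Real.exp_neg]
      have h2e := two_le_exp_one
      have hpos : (0 : ℝ) < Real.exp 1 := Real.exp_pos 1
      rw [show (1:ℝ)/2 = (2:ℝ)⁻¹ by norm_num]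
      exact inv_anti₀ (by norm_num) h2e
    norm_num [hP2, hP1]
    linarith
  have h3 : 3 ≤ n := by omega
  rcases Nat.even_or_odd n with hev | hodd
  · -- n even hence ≥ 4
    obtain ⟨k, hk⟩ := hev
    have h4 : 4 ≤ n := by omega
    have hfact24 : (24 : ℝ) ≤ (n.factorial : ℝ) := by
      have : 24 ≤ n.factorial :=
        calc 24 = Nat.factorial 4 := rfl
          _ ≤ n.factorial := Nat.factorial_le h4
      exact_mod_cast this
    have hPn : Real.exp (-1) ≤ Pp n := exp_neg_one_le_Pp_even n ⟨k, hk⟩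
    have hsub : Pp (n - 1) = Pp n - 1 / n.factorial := by
      have hm : n - 1 + 1 = n := by omega
      have hps := Pp_succ (n - 1)
      rw [hm] at hps
      have hpow : (-1 : ℝ) ^ n = 1 := Even.neg_one_pow ⟨k, hk⟩
      rw [hpow] at hps
      rw [hps]; ring
    rw [hsub]
    have hinv : 1 / (n.factorial : ℝ) ≤ 1 / 24 :=
      one_div_le_one_div_of_le (by norm_num) hfact24
    have hmul : ((n : ℝ) + 2) * Real.exp (-1) ≤ ((n : ℝ) + 2) * Pp n :=
      mul_le_mul_of_nonneg_left hPn (by positivity)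
    linarith
  · -- n odd, ≥ 3
    have hfact24' : (24 : ℝ) ≤ ((n + 1).factorial : ℝ) := by
      have : 24 ≤ (n + 1).factorial :=
        calc 24 = Nat.factorial 4 := rfl
          _ ≤ (n + 1).factorial := Nat.factorial_le (by omega)
      exact_mod_cast this
    have hev1 : Even (n + 1) := Odd.add_one hodd
    have hPn1 : Real.exp (-1) ≤ Pp (n + 1) := exp_neg_one_le_Pp_even (n + 1) hev1
    have e1 : Pp n = Pp (n + 1) - 1 / (n + 1).factorial := by
      have hps := Pp_succ n
      have hpow : (-1 : ℝ) ^ (n + 1) = 1 := hev1.neg_one_pow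
      rw [hpow] at hps
      rw [hps]; ring
    have e2 : Pp (n - 1) = Pp n + 1 / n.factorial := by
      have hm : n - 1 + 1 = n := by omega
      have hps := Pp_succ (n - 1)
      rw [hm] at hps
      have hpow : (-1 : ℝ) ^ n = -1 := hodd.neg_one_pow
      rw [hpow] at hps
      rw [hps]; ring
    rw [e2, e1]
    have hfacteq : ((n + 1).factorial : ℝ) = ((n : ℝ) + 1) * (n.factorial : ℝ) := by
      rw [Nat.factorial_succ]; push_cast; ring
    have hfpos : (0 : ℝ) < (n.factorial : ℝ) := by positivity
    have hkey : ((n : ℝ) + 2) * (1 / ((n + 1).factorial : ℝ)) - 1 / (n.factorial : ℝ)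
        = 1 / ((n + 1).factorial : ℝ) := by
      rw [hfacteq]
      field_simp
      ring
    have hinv : 1 / (((n + 1).factorial : ℕ) : ℝ) ≤ 1 / 24 :=
      one_div_le_one_div_of_le (by norm_num) hfact24'
    have hmul : ((n : ℝ) + 2) * Real.exp (-1) ≤ ((n : ℝ) + 2) * Pp (n + 1) :=
      mul_le_mul_of_nonneg_left hPn1 (by positivity)
    linarith


/-! ### final glue -/

lemma aVal_eq_sum_Gcount (n : ℕ) :
    aVal n = ∑ r ∈ Finset.range n, Gcount n r := by
  rw [aVal_eq_fold]
  have h1 : ∀ σ : Equiv.Perm (Fin n), Tf (seqv σ) n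
      = ∑ r ∈ Finset.range n, (if Tf (seqv σ) r ≤ seqv σ r then 1 else 0) :=
    fun σ => Tf_eq_card (seqv σ) n
  rw [Finset.sum_congr rfl (fun σ _ => h1 σ), Finset.sum_comm]
  apply Finset.sum_congr rfl
  intro r _
  rw [Gcount, Finset.card_filter]

lemma aVal_int (n : ℕ) (hn : 1 ≤ n) :
    (aVal n : ℤ) = ∑ j ∈ Finset.range n, (-1 : ℤ) ^ j * (n.choose (j + 1)) * ((n - j).factorial : ℤ) := by
  rw [← sum_Dcf n hn, aVal_eq_sum_Gcount]
  push_cast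
  apply Finset.sum_congr rfl
  intro r hr
  simp only [Finset.mem_range] at hr
  exact Gcount_eq_Dcf n r hr

lemma choose_term_real (n j : ℕ) (hj : j < n) :
    ((n.choose (j + 1) : ℝ)) * ((n - j).factorial : ℝ)
      = (n.factorial : ℝ) * ((n : ℝ) - j) / ((j + 1).factorial : ℝ) := by
  have h1 : j + 1 ≤ n := hj
  have h2 : n - j = (n - j - 1) + 1 := by omega
  have h3 : n.choose (j + 1) * (j + 1).factorial * (n - (j + 1)).factorial = n.factorial :=
    Nat.choose_mul_factorial_mul_factorial h1
  have h4 : n - (j + 1) = n - j - 1 := by omega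
  rw [h4] at h3
  have h5 : (n - j).factorial = (n - j) * (n - j - 1).factorial := by
    rw [h2, Nat.factorial_succ, ← h2]
  have h6 : ((n : ℝ) - j) = ((n - j : ℕ) : ℝ) := by
    have : j ≤ n := by omega
    push_cast [this]
    ring
  rw [h6]
  have hfpos : (0 : ℝ) < ((j + 1).factorial : ℝ) := by positivity
  rw [eq_div_iff (ne_of_gt hfpos)]
  have := congrArg (fun x : ℕ => (x : ℝ)) h3
  push_cast at this ⊢
  rw [h5]
  push_cast
  nlinarith [this]

lemma aVal_real (n : ℕ) (hn : 1 ≤ n) :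
    (aVal n : ℝ) = (n.factorial : ℝ)
      * ∑ j ∈ Finset.range n, (-1 : ℝ) ^ j * ((n : ℝ) - j) / ((j + 1).factorial : ℝ) := by
  have h1 : (aVal n : ℝ)
      = ∑ j ∈ Finset.range n, (-1 : ℝ) ^ j * (n.choose (j + 1) : ℝ) * ((n - j).factorial : ℝ) := by
    have := aVal_int n hn
    have h2 := congrArg (fun x : ℤ => (x : ℝ)) this
    push_cast at h2
    exact h2
  rw [h1, Finset.mul_sum]
  apply Finset.sum_congr rfl
  intro j hj
  simp only [Finset.mem_range] at hj
  have := choose_term_real n j hj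
  calc (-1 : ℝ) ^ j * (n.choose (j + 1) : ℝ) * ((n - j).factorial : ℝ)
      = (-1 : ℝ) ^ j * ((n.choose (j + 1) : ℝ) * ((n - j).factorial : ℝ)) := by ring
    _ = (-1 : ℝ) ^ j * ((n.factorial : ℝ) * ((n : ℝ) - j) / ((j + 1).factorial : ℝ)) := by rw [this]
    _ = (n.factorial : ℝ) * ((-1 : ℝ) ^ j * ((n : ℝ) - j) / ((j + 1).factorial : ℝ)) := by ring

lemma real_sum_eq (n : ℕ) (hn : 1 ≤ n) :
    ∑ j ∈ Finset.range n, (-1 : ℝ) ^ j * ((n : ℝ) - j) / ((j + 1).factorial : ℝ)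
      = ((n : ℝ) + 1) * (1 - Pp n) - Pp (n - 1) := by
  have hterm : ∀ j ∈ Finset.range n,
      (-1 : ℝ) ^ j * ((n : ℝ) - j) / ((j + 1).factorial : ℝ)
      = ((n : ℝ) + 1) * ((-1 : ℝ) ^ j / ((j + 1).factorial : ℝ))
        - (-1 : ℝ) ^ j / (j.factorial : ℝ) := by
    intro j _
    have hfs : ((j + 1).factorial : ℝ) = ((j : ℝ) + 1) * (j.factorial : ℝ) := by
      rw [Nat.factorial_succ]; push_cast; ring
    have hj1 : ((j : ℝ) + 1) ≠ 0 := by positivity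
    have hjf : (j.factorial : ℝ) ≠ 0 := by positivity
    rw [hfs]
    field_simp
    ring
  rw [Finset.sum_congr rfl hterm, Finset.sum_sub_distrib, ← Finset.mul_sum]
  have h1 : ∑ j ∈ Finset.range n, (-1 : ℝ) ^ j / ((j + 1).factorial : ℝ) = 1 - Pp n := by
    have hp : Pp n = (∑ i ∈ Finset.range n, (-1 : ℝ) ^ (i + 1) / ((i + 1).factorial : ℝ)) + 1 := by
      rw [Pp, Finset.sum_range_succ' (fun k => (-1 : ℝ) ^ k / (k.factorial : ℝ)) n]
      norm_num
    have h2 : ∑ i ∈ Finset.range n, (-1 : ℝ) ^ (i + 1) / ((i + 1).factorial : ℝ)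
        = -∑ i ∈ Finset.range n, (-1 : ℝ) ^ i / ((i + 1).factorial : ℝ) := by
      rw [← Finset.sum_neg_distrib]
      apply Finset.sum_congr rfl
      intro i _
      rw [pow_succ]
      ring
    rw [h2] at hp
    linarith
  have h2 : ∑ j ∈ Finset.range n, (-1 : ℝ) ^ j / (j.factorial : ℝ) = Pp (n - 1) := by
    have hm : n - 1 + 1 = n := by omega
    rw [Pp, hm]
  rw [h1, h2]

theorem aVal_le (n : ℕ) (hn : 1 ≤ n) :
    (aVal n : ℝ) ≤ ((1 - Real.exp (-1)) * n + Real.exp (-1)) * (n.factorial : ℝ) := by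
  rw [aVal_real n hn, real_sum_eq n hn]
  have hkey := key_ineq n hn
  have hfpos : (0 : ℝ) < (n.factorial : ℝ) := by positivity
  have hS : ((n : ℝ) + 1) * (1 - Pp n) - Pp (n - 1)
      ≤ (1 - Real.exp (-1)) * n + Real.exp (-1) := by nlinarith
  calc (n.factorial : ℝ) * (((n : ℝ) + 1) * (1 - Pp n) - Pp (n - 1))
      ≤ (n.factorial : ℝ) * ((1 - Real.exp (-1)) * n + Real.exp (-1)) :=
        mul_le_mul_of_nonneg_left hS (le_of_lt hfpos)
    _ = ((1 - Real.exp (-1)) * n + Real.exp (-1)) * (n.factorial : ℝ) := by ring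

/-- For every integer `n ≥ 1`, `a(n) ≤ ((1 − 1/e)n + 1/e) ⬝ n!`: the expected size of the
matching produced by Ranking on `MonotoneG` under a uniformly random permutation is at
most `(1 − 1/e)n + 1/e`. -/
theorem stmt_9 (n : ℕ) (hn : 1 ≤ n) :
    (aVal n : ℝ) ≤ ((1 - 1 / Real.exp 1) * n + 1 / Real.exp 1) * Nat.factorial n := by
  have h := aVal_le n hn
  rw [Real.exp_neg] at h
  have : (Real.exp 1)⁻¹ = 1 / Real.exp 1 := by rw [one_div]
  rw [this] at h
  exact h
end
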